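/- Let $s > 1/2$. For $W \in H^s(\mathbb{T})$ and $t \in \mathbb{R}$, define $F_{\mathrm{osc}}(W,t)$ via Fourier coefficients $\widehat{F_{\mathrm{osc}}}(W,t)(k) = -\sum \frac{e^{it(|k|-|l|+|m|-|j|)}}{i(|k|-|l|+|m|-|j|)} \hat{W}(j)\hat{W}(l)\overline{\hat{W}(m)}$, the sum being over $(l,m,j)$ with $k - l + m - j = 0$ and $|k|-|l|+|m|-|j| \ne 0$. Then $\|F_{\mathrm{osc}}(W,t)\|_{H^s(\mathbb{T})} \le C_s \|W\|_{H^s(\mathbb{T})}^3$ with $C_s$ depending only on $s$, uniformly in $t$. -/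

import Mathlib

open scoped ComplexConjugate
open Complex

/-- Fourier coefficients of the oscillatory primitive `F_osc(W,t)` on the torus:
the `(l,m)` term has `j = k - l + m` and phase `φ = |k|-|l|+|m|-|j| ≠ 0`. -/
noncomputable def FoscCoeff (W : ℤ → ℂ) (t : ℝ) (k : ℤ) : ℂ :=
  ∑' p : ℤ × ℤ,
    (let l := p.1; let m := p.2; let j := k - l + m;
     let φ : ℤ := |k| - |l| + |m| - |j|;
     if φ ≠ 0 then
       -(Complex.exp (I * t * φ) / (I * φ)) * W j * W l * conj (W m)
     else 0)

open MeasureTheory ENNReal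
lemma cs_tsum {ι : Type*} [Countable ι] [MeasurableSpace ι] [MeasurableSingletonClass ι]
    (f g : ι → ℝ≥0∞) :
    ∑' i, f i * g i ≤ (∑' i, f i ^ 2) ^ (1/2 : ℝ) * (∑' i, g i ^ 2) ^ (1/2 : ℝ) := by
  have hpq : (2:ℝ).HolderConjugate 2 := ⟨by norm_num, by norm_num, by norm_num⟩
  have h := ENNReal.lintegral_mul_le_Lp_mul_Lq (Measure.count : Measure ι) hpq
    (f := f) (g := g) (Measurable.of_discrete).aemeasurable (Measurable.of_discrete).aemeasurable
  rw [lintegral_count, lintegral_count, lintegral_count] at h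
  have e2 : ∀ h : ι → ℝ≥0∞, (fun i => h i ^ (2:ℝ)) = fun i => h i ^ 2 := by
    intro h; funext i; rw [← ENNReal.rpow_natCast (h i) 2]; norm_num
  simp only [Pi.mul_apply] at h
  rw [e2 f, e2 g] at h
  simpa using h

lemma tsum_shift' (f : ℤ → ℝ≥0∞) (c : ℤ) : ∑' l, f (c - l) = ∑' l, f l := by
  have hinv : Function.Involutive (fun l : ℤ => c - l) := by intro l; simp
  simpa using (Function.Involutive.toPerm _ hinv).tsum_eq f

lemma tsum_shift (f : ℤ → ℝ≥0∞) (k m : ℤ) : ∑' l, f (k - l + m) = ∑' l, f l := by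
  simp_rw [sub_add_eq_add_sub]
  exact tsum_shift' f (k + m)

lemma sumA (g h : ℤ → ℝ≥0∞) :
    ∑' p : ℤ × ℤ, g p.1 * h p.2 = (∑' l, g l) * (∑' m, h m) := by
  rw [ENNReal.tsum_prod' (f := fun p : ℤ × ℤ => g p.1 * h p.2)]
  simp only [ENNReal.tsum_mul_left, ENNReal.tsum_mul_right]

lemma sumB (f h : ℤ → ℝ≥0∞) (k : ℤ) :
    ∑' p : ℤ × ℤ, f (k - p.1 + p.2) * h p.2 = (∑' l, f l) * (∑' m, h m) := by
  rw [ENNReal.tsum_prod' (f := fun p : ℤ × ℤ => f (k - p.1 + p.2) * h p.2)]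
  rw [ENNReal.tsum_comm]
  calc ∑' (m : ℤ), ∑' (l : ℤ), f (k - l + m) * h m
      = ∑' m : ℤ, (∑' l : ℤ, f (k - l + m)) * h m := by
        simp only [ENNReal.tsum_mul_right]
    _ = ∑' m : ℤ, (∑' l, f l) * h m := by simp_rw [tsum_shift]
    _ = (∑' l, f l) * ∑' m, h m := ENNReal.tsum_mul_left

lemma sumB' (f g : ℤ → ℝ≥0∞) (k : ℤ) :
    ∑' p : ℤ × ℤ, f (k - p.1 + p.2) * g p.1 = (∑' l, f l) * (∑' m, g m) := by
  rw [ENNReal.tsum_prod' (f := fun p : ℤ × ℤ => f (k - p.1 + p.2) * g p.1)]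
  calc ∑' (l : ℤ), ∑' (m : ℤ), f (k - l + m) * g l
      = ∑' l : ℤ, (∑' m : ℤ, f (k - l + m)) * g l := by
        simp only [ENNReal.tsum_mul_right]
    _ = ∑' l : ℤ, (∑' m, f m) * g l := by
        congr 1; funext l
        congr 1
        have h1 : ∀ m : ℤ, k - l + m = m + (k - l) := by intro m; ring
        simp_rw [h1]
        exact (Equiv.addRight (k - l)).tsum_eq f
    _ = (∑' m, f m) * ∑' l, g l := ENNReal.tsum_mul_left

lemma sumC (f g h : ℤ → ℝ≥0∞) :
    ∑' k : ℤ, ∑' p : ℤ × ℤ, f (k - p.1 + p.2) * g p.1 * h p.2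
      = (∑' l, f l) * (∑' l, g l) * (∑' m, h m) := by
  rw [ENNReal.tsum_comm]
  calc ∑' (p : ℤ × ℤ), ∑' (k : ℤ), f (k - p.1 + p.2) * g p.1 * h p.2
      = ∑' p : ℤ × ℤ, (∑' k : ℤ, f (k - p.1 + p.2)) * g p.1 * h p.2 := by
        simp only [ENNReal.tsum_mul_right]
    _ = ∑' p : ℤ × ℤ, (∑' l, f l) * (g p.1 * h p.2) := by
        congr 1; funext p
        rw [mul_assoc]
        congr 1
        have h1 : ∀ kk : ℤ, kk - p.1 + p.2 = kk + (p.2 - p.1) := by intro kk; ring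
        simp_rw [h1]
        exact (Equiv.addRight (p.2 - p.1)).tsum_eq f
    _ = (∑' l, f l) * ∑' p : ℤ × ℤ, g p.1 * h p.2 := ENNReal.tsum_mul_left
    _ = _ := by rw [sumA, mul_assoc]

lemma pow_half_sq (x : ℝ≥0∞) : (x ^ (1/2:ℝ)) ^ 2 = x := by
  rw [← ENNReal.rpow_natCast (x ^ (1/2:ℝ)) 2, ← ENNReal.rpow_mul]; norm_num

lemma half_mul_self (x : ℝ≥0∞) : x ^ (1/2:ℝ) * x ^ (1/2:ℝ) = x := by
  rw [← sq]; exact pow_half_sq x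

lemma sq_pow_half (x : ℝ≥0∞) : (x ^ 2) ^ (1/2:ℝ) = x := by
  rw [← ENNReal.rpow_natCast x 2, ← ENNReal.rpow_mul]; norm_num

lemma sq3 (x y z : ℝ≥0∞) : (x + y + z)^2 ≤ 9 * (x^2 + y^2 + z^2) := by
  set M := max x (max y z) with hM
  have hsum : x + y + z ≤ 3 * M := by
    have hx : x ≤ M := le_max_left _ _
    have hy : y ≤ M := le_trans (le_max_left _ _) (le_max_right _ _)
    have hz : z ≤ M := le_trans (le_max_right _ _) (le_max_right _ _)
    calc x + y + z ≤ M + M + M := by gcongr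
      _ = 3 * M := by ring
  calc (x+y+z)^2 ≤ (3*M)^2 := by gcongr
    _ = 9 * M^2 := by ring
    _ ≤ 9 * (x^2+y^2+z^2) := by
        gcongr
        rcases max_choice x (max y z) with h|h
        · rw [hM, h]; exact le_add_of_le_of_nonneg (le_add_of_le_of_nonneg le_rfl zero_le) zero_le
        · rcases max_choice y z with h'|h'
          · rw [hM, h, h']
            calc y^2 ≤ x^2 + y^2 := le_add_self
              _ ≤ x^2 + y^2 + z^2 := le_add_of_le_of_nonneg le_rfl zero_le
          · rw [hM, h, h']; exact le_add_self

lemma weight3 {s : ℝ} (hs : 0 < s) (k l m : ℤ) :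
    (1+(k:ℝ)^2) ^ (s/2) ≤
      3^s * ((1+((k - l + m : ℤ):ℝ)^2)^(s/2) + (1+(l:ℝ)^2)^(s/2) + (1+(m:ℝ)^2)^(s/2)) := by
  have hjr : ((k - l + m : ℤ):ℝ) = (k:ℝ) - l + m := by push_cast; ring
  rw [hjr]
  set jr : ℝ := (k:ℝ) - l + m with hjrd
  set M := max (1+jr^2) (max (1+(l:ℝ)^2) (1+(m:ℝ)^2)) with hMd
  have hM0 : (0:ℝ) ≤ M := le_trans (by positivity) (le_max_left _ _)
  have h1 : 1+jr^2 ≤ M := le_max_left _ _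
  have h2 : 1+(l:ℝ)^2 ≤ M := le_trans (le_max_left _ _) (le_max_right _ _)
  have h3 : 1+(m:ℝ)^2 ≤ M := le_trans (le_max_right _ _) (le_max_right _ _)
  have hk : 1+(k:ℝ)^2 ≤ 9*M := by
    have hkr : (k:ℝ)^2 = (jr + (l:ℝ) - m)^2 := by rw [hjrd]; ring
    nlinarith [sq_nonneg (jr - (l:ℝ)), sq_nonneg (jr + (m:ℝ)), sq_nonneg ((l:ℝ) + m),
      sq_nonneg (jr - m), sq_nonneg ((l:ℝ) - m), sq_nonneg (jr + l)]
  have h9 : (9:ℝ)^(s/2) = 3^s := by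
    have h32 : (9:ℝ) = (3:ℝ)^(2:ℝ) := by
      rw [show ((2:ℝ)) = ((2:ℕ):ℝ) by norm_num, Real.rpow_natCast]; norm_num
    rw [h32, ← Real.rpow_mul (by norm_num)]; congr 1; ring
  have hMs : M^(s/2) ≤ (1+jr^2)^(s/2) + (1+(l:ℝ)^2)^(s/2) + (1+(m:ℝ)^2)^(s/2) := by
    have hcase : M = 1+jr^2 ∨ M = 1+(l:ℝ)^2 ∨ M = 1+(m:ℝ)^2 := by
      rcases max_choice (1+jr^2) (max (1+(l:ℝ)^2) (1+(m:ℝ)^2)) with h|h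
      · exact Or.inl h
      · rcases max_choice (1+(l:ℝ)^2) (1+(m:ℝ)^2) with h'|h'
        · exact Or.inr (Or.inl (h.trans h'))
        · exact Or.inr (Or.inr (h.trans h'))
    have pj : (0:ℝ) ≤ (1+jr^2)^(s/2) := by positivity
    have pl : (0:ℝ) ≤ (1+(l:ℝ)^2)^(s/2) := by positivity
    have pm : (0:ℝ) ≤ (1+(m:ℝ)^2)^(s/2) := by positivity
    rcases hcase with h|h|h <;> rw [h] <;> linarith
  calc (1+(k:ℝ)^2)^(s/2) ≤ (9*M)^(s/2) := Real.rpow_le_rpow (by positivity) hk (by linarith)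
    _ = 9^(s/2) * M^(s/2) := Real.mul_rpow (by norm_num) hM0
    _ = 3^s * M^(s/2) := by rw [h9]
    _ ≤ _ := by
        apply mul_le_mul_of_nonneg_left hMs
        positivity

lemma summable_weight_inv {s : ℝ} (hs : 1/2 < s) :
    Summable (fun n : ℤ => (1+(n:ℝ)^2) ^ (-s)) := by
  have hb : (1:ℝ) < 2*s := by linarith
  have hdom : Summable (fun n : ℤ => |(n:ℝ)| ^ (-(2*s)) + (if n = 0 then (1:ℝ) else 0)) := by
    apply (Real.summable_abs_int_rpow hb).add
    apply summable_of_finite_support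
    apply Set.Finite.subset (Set.finite_singleton (0:ℤ))
    intro n hn
    simp only [Function.mem_support] at hn
    by_contra h
    simp only [Set.mem_singleton_iff] at h
    exact hn (by simp [h])
  apply Summable.of_nonneg_of_le (fun n => by positivity) _ hdom
  intro n
  rcases eq_or_ne n 0 with h|h
  · subst h
    norm_num
    exact Real.rpow_nonneg le_rfl _
  · have h0 : (0:ℝ) < (n:ℝ)^2 := by
      have : (n:ℝ) ≠ 0 := Int.cast_ne_zero.mpr h
      positivity
    have h1 : (1+(n:ℝ)^2) ^ (-s) ≤ ((n:ℝ)^2) ^ (-s) :=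
      Real.rpow_le_rpow_of_nonpos h0 (by linarith) (by linarith)
    have h2 : ((n:ℝ)^2) ^ (-s) = |(n:ℝ)| ^ (-(2*s)) := by
      rw [← _root_.sq_abs, ← Real.rpow_natCast |(n:ℝ)| 2, ← Real.rpow_mul (abs_nonneg _)]
      norm_num
    simp only [if_neg h, add_zero]
    linarith [h1, h2.le]

open ComplexConjugate in
lemma term_norm_le (W : ℤ → ℂ) (t : ℝ) (k : ℤ) (p : ℤ × ℤ) :
    ‖(let l := p.1; let m := p.2; let j := k - l + m;
      let φ : ℤ := |k| - |l| + |m| - |j|;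
      if φ ≠ 0 then
        -(Complex.exp (Complex.I * t * φ) / (Complex.I * φ)) * W j * W l * conj (W m)
      else 0)‖ ≤ ‖W (k - p.1 + p.2)‖ * ‖W p.1‖ * ‖W p.2‖ := by
  dsimp only
  set φ : ℤ := |k| - |p.1| + |p.2| - |k - p.1 + p.2| with hφd
  split_ifs with hφ
  · have he : ‖Complex.exp (Complex.I * t * φ)‖ = 1 := by
      rw [Complex.norm_exp]
      simp [Complex.mul_re]
    have hd : (1:ℝ) ≤ ‖(Complex.I * (φ:ℂ))‖ := by
      rw [norm_mul, Complex.norm_I, one_mul]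
      have h1 : ((φ:ℤ):ℂ) = (((φ:ℤ):ℝ):ℂ) := by push_cast; rfl
      rw [h1, Complex.norm_real]
      have : (1:ℤ) ≤ |φ| := Int.one_le_abs hφ
      calc (1:ℝ) ≤ |(φ:ℤ)| := by exact_mod_cast this
        _ = |((φ:ℤ):ℝ)| := by push_cast; rfl
  -- fix below
    have hq : ‖Complex.exp (Complex.I * t * φ) / (Complex.I * φ)‖ ≤ 1 := by
      rw [norm_div, he]
      apply div_le_one_of_le₀ hd (norm_nonneg _)
    calc ‖-(Complex.exp (Complex.I * t * φ) / (Complex.I * φ)) * W (k - p.1 + p.2) * W p.1 * conj (W p.2)‖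
        = ‖Complex.exp (Complex.I * t * φ) / (Complex.I * φ)‖ * ‖W (k - p.1 + p.2)‖ * ‖W p.1‖ * ‖W p.2‖ := by
          simp [norm_mul]
      _ ≤ 1 * ‖W (k - p.1 + p.2)‖ * ‖W p.1‖ * ‖W p.2‖ := by
          gcongr
      _ = ‖W (k - p.1 + p.2)‖ * ‖W p.1‖ * ‖W p.2‖ := by ring
  · simp; positivity


/-- First estimate of Lemma 3.3: `‖F_osc(W,t)‖_{Hˢ(𝕋)} ≤ C_s ‖W‖_{Hˢ(𝕋)}³`,
uniformly in `t`, for `s > 1/2`. -/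
theorem Fosc_Hs_bound_torus (s : ℝ) (hs : 1 / 2 < s) :
    ∃ C : ℝ, 0 < C ∧ ∀ (W : ℤ → ℂ) (t : ℝ),
      Summable (fun k : ℤ => (1 + (k : ℝ) ^ 2) ^ s * ‖W k‖ ^ 2) →
      (∀ k : ℤ, Summable fun p : ℤ × ℤ =>
        ‖W (k - p.1 + p.2)‖ * ‖W p.1‖ * ‖W p.2‖) →
      Real.sqrt (∑' k : ℤ, (1 + (k : ℝ) ^ 2) ^ s * ‖FoscCoeff W t k‖ ^ 2) ≤
        C * Real.sqrt (∑' k : ℤ, (1 + (k : ℝ) ^ 2) ^ s * ‖W k‖ ^ 2) ^ 3 := by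
  have hs0 : (0:ℝ) < s := by linarith
  have hZsum := summable_weight_inv hs
  set Zr : ℝ := ∑' n : ℤ, (1+(n:ℝ)^2) ^ (-s) with hZrd
  have hZpos : 0 < Zr := by
    apply Summable.tsum_pos hZsum (fun n => by positivity) 0
    norm_num
  refine ⟨Real.sqrt 27 * 3^s * Zr, by positivity, ?_⟩
  intro W t hW h2
  -- notation
  set a : ℤ → ℝ≥0∞ := fun n => (‖W n‖₊ : ℝ≥0∞) with had
  set v : ℤ → ℝ≥0∞ := fun n => ENNReal.ofReal ((1+(n:ℝ)^2)^(s/2)) with hvd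
  set X : ℝ := ∑' k : ℤ, (1 + (k : ℝ) ^ 2) ^ s * ‖W k‖ ^ 2 with hXd
  have hX : 0 ≤ X := tsum_nonneg (fun k => by positivity)
  set 𝒜 : ℝ≥0∞ := ∑' n, a n with hAd
  set N2 : ℝ≥0∞ := ∑' n, (v n * a n)^2 with hN2d
  have hv0 : ∀ n, v n ≠ 0 := fun n => by
    simp only [hvd, ne_eq, ENNReal.ofReal_eq_zero, not_le]
    positivity
  have hvt : ∀ n, v n ≠ ⊤ := fun n => ENNReal.ofReal_ne_top
  have hva : ∀ n : ℤ, (v n * a n)^2 = ENNReal.ofReal ((1+(n:ℝ)^2)^s * ‖W n‖^2) := by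
    intro n
    have h1 : v n * a n = ENNReal.ofReal ((1+(n:ℝ)^2)^(s/2) * ‖W n‖) := by
      rw [ENNReal.ofReal_mul (by positivity), hvd, had, ofReal_norm, enorm_eq_nnnorm]
    rw [h1, ← ENNReal.ofReal_pow (by positivity)]
    congr 1
    rw [mul_pow, ← Real.rpow_natCast ((1+(n:ℝ)^2)^(s/2)) 2, ← Real.rpow_mul (by positivity)]
    norm_num
  have hN2 : N2 = ENNReal.ofReal X := by
    rw [hN2d, hXd]
    rw [ENNReal.ofReal_tsum_of_nonneg (fun k => by positivity) hW]
    exact tsum_congr hva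
  -- pointwise bound on FoscCoeff
  have hβG : ∀ k : ℤ, ENNReal.ofReal ‖FoscCoeff W t k‖ ≤
      ∑' p : ℤ × ℤ, a (k - p.1 + p.2) * a p.1 * a p.2 := by
    intro k
    have hsum_norm : Summable (fun p : ℤ × ℤ =>
        ‖(let l := p.1; let m := p.2; let j := k - l + m;
          let φ : ℤ := |k| - |l| + |m| - |j|;
          if φ ≠ 0 then
            -(Complex.exp (Complex.I * t * φ) / (Complex.I * φ)) * W j * W l * conj (W m)
          else 0)‖) :=
      Summable.of_nonneg_of_le (fun p => norm_nonneg _) (term_norm_le W t k) (h2 k)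
    have hn1 : ‖FoscCoeff W t k‖ ≤ ∑' p : ℤ × ℤ,
        ‖(let l := p.1; let m := p.2; let j := k - l + m;
          let φ : ℤ := |k| - |l| + |m| - |j|;
          if φ ≠ 0 then
            -(Complex.exp (Complex.I * t * φ) / (Complex.I * φ)) * W j * W l * conj (W m)
          else 0)‖ := norm_tsum_le_tsum_norm hsum_norm
    have hn2 : ‖FoscCoeff W t k‖ ≤ ∑' p : ℤ × ℤ, ‖W (k - p.1 + p.2)‖ * ‖W p.1‖ * ‖W p.2‖ :=
      hn1.trans (Summable.tsum_le_tsum (term_norm_le W t k) hsum_norm (h2 k))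
    calc ENNReal.ofReal ‖FoscCoeff W t k‖
        ≤ ENNReal.ofReal (∑' p : ℤ × ℤ, ‖W (k - p.1 + p.2)‖ * ‖W p.1‖ * ‖W p.2‖) :=
          ENNReal.ofReal_le_ofReal hn2
      _ = ∑' p : ℤ × ℤ, ENNReal.ofReal (‖W (k - p.1 + p.2)‖ * ‖W p.1‖ * ‖W p.2‖) :=
          ENNReal.ofReal_tsum_of_nonneg (fun p => by positivity) (h2 k)
      _ = ∑' p : ℤ × ℤ, a (k - p.1 + p.2) * a p.1 * a p.2 := by
          apply tsum_congr; intro p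
          rw [ENNReal.ofReal_mul (by positivity), ENNReal.ofReal_mul (by positivity)]
          simp only [had, ofReal_norm, enorm_eq_nnnorm]
  -- weight inequality in ENNReal
  set E3 : ℝ≥0∞ := ENNReal.ofReal (3^s) with hE3d
  have hweightE : ∀ k l m : ℤ, v k ≤ E3 * (v (k - l + m) + v l + v m) := by
    intro k l m
    calc v k ≤ ENNReal.ofReal (3^s * ((1+((k - l + m : ℤ):ℝ)^2)^(s/2)
        + (1+(l:ℝ)^2)^(s/2) + (1+(m:ℝ)^2)^(s/2))) :=
          ENNReal.ofReal_le_ofReal (weight3 hs0 k l m)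
      _ = E3 * (v (k - l + m) + v l + v m) := by
          rw [ENNReal.ofReal_mul (by positivity), ENNReal.ofReal_add (by positivity) (by positivity),
            ENNReal.ofReal_add (by positivity) (by positivity)]
  -- trilinear pieces
  set va : ℤ → ℝ≥0∞ := fun n => (v n * a n)^2 with hvad
  set T1 : ℤ → ℝ≥0∞ := fun k => ∑' p : ℤ × ℤ,
    (v (k - p.1 + p.2) * a (k - p.1 + p.2)) * (a p.1 * a p.2) with hT1d
  set T2 : ℤ → ℝ≥0∞ := fun k => ∑' p : ℤ × ℤ,
    (v p.1 * a p.1) * (a (k - p.1 + p.2) * a p.2) with hT2d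
  set T3 : ℤ → ℝ≥0∞ := fun k => ∑' p : ℤ × ℤ,
    (v p.2 * a p.2) * (a (k - p.1 + p.2) * a p.1) with hT3d
  set S1 : ℤ → ℝ≥0∞ := fun k => ∑' p : ℤ × ℤ, va (k - p.1 + p.2) * a p.1 * a p.2 with hS1d
  set S2 : ℤ → ℝ≥0∞ := fun k => ∑' p : ℤ × ℤ, a (k - p.1 + p.2) * va p.1 * a p.2 with hS2d
  set S3 : ℤ → ℝ≥0∞ := fun k => ∑' p : ℤ × ℤ, a (k - p.1 + p.2) * a p.1 * va p.2 with hS3d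
  have key : ∀ k : ℤ, v k * (∑' p : ℤ × ℤ, a (k - p.1 + p.2) * a p.1 * a p.2)
      ≤ E3 * (T1 k + T2 k + T3 k) := by
    intro k
    rw [← ENNReal.tsum_mul_left]
    calc ∑' p : ℤ × ℤ, v k * (a (k - p.1 + p.2) * a p.1 * a p.2)
        ≤ ∑' p : ℤ × ℤ, (E3 * (v (k - p.1 + p.2) + v p.1 + v p.2))
            * (a (k - p.1 + p.2) * a p.1 * a p.2) :=
          ENNReal.tsum_le_tsum (fun p => mul_le_mul_left (hweightE k p.1 p.2) _)
      _ = ∑' p : ℤ × ℤ, E3 * ((v (k - p.1 + p.2) * a (k - p.1 + p.2)) * (a p.1 * a p.2)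
            + (v p.1 * a p.1) * (a (k - p.1 + p.2) * a p.2)
            + (v p.2 * a p.2) * (a (k - p.1 + p.2) * a p.1)) := by
          apply tsum_congr; intro p; ring
      _ = E3 * (T1 k + T2 k + T3 k) := by
          rw [ENNReal.tsum_mul_left, hT1d, hT2d, hT3d, ← ENNReal.tsum_add, ← ENNReal.tsum_add]
  have hgsq : ∀ x : ℝ≥0∞, (x ^ (1/2:ℝ))^2 = x := pow_half_sq
  have hT1b : ∀ k, T1 k ≤ (S1 k) ^ (1/2:ℝ) * 𝒜 := by
    intro k
    have hcs := cs_tsum (fun p : ℤ × ℤ =>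
        (v (k - p.1 + p.2) * a (k - p.1 + p.2)) * (a p.1 * a p.2) ^ (1/2:ℝ))
      (fun p : ℤ × ℤ => (a p.1 * a p.2) ^ (1/2:ℝ))
    have he1 : T1 k = ∑' p : ℤ × ℤ,
        ((v (k - p.1 + p.2) * a (k - p.1 + p.2)) * (a p.1 * a p.2) ^ (1/2:ℝ))
          * ((a p.1 * a p.2) ^ (1/2:ℝ)) := by
      rw [hT1d]; apply tsum_congr; intro p
      conv_rhs => rw [mul_assoc, half_mul_self]
    have he2 : (∑' p : ℤ × ℤ,
        ((v (k - p.1 + p.2) * a (k - p.1 + p.2)) * (a p.1 * a p.2) ^ (1/2:ℝ))^2) = S1 k := by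
      rw [hS1d]; apply tsum_congr; intro p
      rw [mul_pow, hgsq, hvad]; ring
    have he3 : (∑' p : ℤ × ℤ, ((a p.1 * a p.2) ^ (1/2:ℝ))^2) = 𝒜 ^ 2 := by
      calc (∑' p : ℤ × ℤ, ((a p.1 * a p.2) ^ (1/2:ℝ))^2) = ∑' p : ℤ × ℤ, a p.1 * a p.2 := by
            apply tsum_congr; intro p; rw [hgsq]
        _ = 𝒜 * 𝒜 := sumA a a
        _ = 𝒜 ^ 2 := (sq 𝒜).symm
    rw [he1]
    calc _ ≤ _ := hcs
      _ = (S1 k) ^ (1/2:ℝ) * 𝒜 := by rw [he2, he3, sq_pow_half]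
  have hT2b : ∀ k, T2 k ≤ (S2 k) ^ (1/2:ℝ) * 𝒜 := by
    intro k
    have hcs := cs_tsum (fun p : ℤ × ℤ =>
        (v p.1 * a p.1) * (a (k - p.1 + p.2) * a p.2) ^ (1/2:ℝ))
      (fun p : ℤ × ℤ => (a (k - p.1 + p.2) * a p.2) ^ (1/2:ℝ))
    have he1 : T2 k = ∑' p : ℤ × ℤ,
        ((v p.1 * a p.1) * (a (k - p.1 + p.2) * a p.2) ^ (1/2:ℝ))
          * ((a (k - p.1 + p.2) * a p.2) ^ (1/2:ℝ)) := by
      rw [hT2d]; apply tsum_congr; intro p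
      conv_rhs => rw [mul_assoc, half_mul_self]
    have he2 : (∑' p : ℤ × ℤ,
        ((v p.1 * a p.1) * (a (k - p.1 + p.2) * a p.2) ^ (1/2:ℝ))^2) = S2 k := by
      rw [hS2d]; apply tsum_congr; intro p
      rw [mul_pow, hgsq, hvad]; ring
    have he3 : (∑' p : ℤ × ℤ, ((a (k - p.1 + p.2) * a p.2) ^ (1/2:ℝ))^2) = 𝒜 ^ 2 := by
      calc (∑' p : ℤ × ℤ, ((a (k - p.1 + p.2) * a p.2) ^ (1/2:ℝ))^2)
          = ∑' p : ℤ × ℤ, a (k - p.1 + p.2) * a p.2 := by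
            apply tsum_congr; intro p; rw [hgsq]
        _ = 𝒜 * 𝒜 := sumB a a k
        _ = 𝒜 ^ 2 := (sq 𝒜).symm
    rw [he1]
    calc _ ≤ _ := hcs
      _ = (S2 k) ^ (1/2:ℝ) * 𝒜 := by rw [he2, he3, sq_pow_half]
  have hT3b : ∀ k, T3 k ≤ (S3 k) ^ (1/2:ℝ) * 𝒜 := by
    intro k
    have hcs := cs_tsum (fun p : ℤ × ℤ =>
        (v p.2 * a p.2) * (a (k - p.1 + p.2) * a p.1) ^ (1/2:ℝ))
      (fun p : ℤ × ℤ => (a (k - p.1 + p.2) * a p.1) ^ (1/2:ℝ))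
    have he1 : T3 k = ∑' p : ℤ × ℤ,
        ((v p.2 * a p.2) * (a (k - p.1 + p.2) * a p.1) ^ (1/2:ℝ))
          * ((a (k - p.1 + p.2) * a p.1) ^ (1/2:ℝ)) := by
      rw [hT3d]; apply tsum_congr; intro p
      conv_rhs => rw [mul_assoc, half_mul_self]
    have he2 : (∑' p : ℤ × ℤ,
        ((v p.2 * a p.2) * (a (k - p.1 + p.2) * a p.1) ^ (1/2:ℝ))^2) = S3 k := by
      rw [hS3d]; apply tsum_congr; intro p
      rw [mul_pow, hgsq, hvad]; ring
    have he3 : (∑' p : ℤ × ℤ, ((a (k - p.1 + p.2) * a p.1) ^ (1/2:ℝ))^2) = 𝒜 ^ 2 := by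
      calc (∑' p : ℤ × ℤ, ((a (k - p.1 + p.2) * a p.1) ^ (1/2:ℝ))^2)
          = ∑' p : ℤ × ℤ, a (k - p.1 + p.2) * a p.1 := by
            apply tsum_congr; intro p; rw [hgsq]
        _ = 𝒜 * 𝒜 := sumB' a a k
        _ = 𝒜 ^ 2 := (sq 𝒜).symm
    rw [he1]
    calc _ ≤ _ := hcs
      _ = (S3 k) ^ (1/2:ℝ) * 𝒜 := by rw [he2, he3, sq_pow_half]
  have hS1sum : ∑' k : ℤ, S1 k = N2 * 𝒜 * 𝒜 := by
    rw [hS1d]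
    have := sumC va a a
    rw [this, hvad, hN2d]
  have hS2sum : ∑' k : ℤ, S2 k = 𝒜 * N2 * 𝒜 := by
    rw [hS2d]
    have := sumC a va a
    rw [this, hvad, hN2d]
  have hS3sum : ∑' k : ℤ, S3 k = 𝒜 * 𝒜 * N2 := by
    rw [hS3d]
    have := sumC a a va
    rw [this, hvad, hN2d]
  -- square bound per k
  have hβ : ∀ k : ℤ, (v k * ENNReal.ofReal ‖FoscCoeff W t k‖)^2
      ≤ (E3^2 * 9 * 𝒜^2) * (S1 k + S2 k + S3 k) := by
    intro k
    have b1 : v k * ENNReal.ofReal ‖FoscCoeff W t k‖ ≤ E3 * (T1 k + T2 k + T3 k) :=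
      (mul_le_mul_right (hβG k) (v k)).trans (key k)
    have b2 : (v k * ENNReal.ofReal ‖FoscCoeff W t k‖)^2 ≤ (E3 * (T1 k + T2 k + T3 k))^2 := by
      exact pow_le_pow_left' b1 2
    have b3 : (T1 k + T2 k + T3 k)^2 ≤ 9 * (T1 k^2 + T2 k^2 + T3 k^2) := sq3 _ _ _
    have b4 : T1 k^2 + T2 k^2 + T3 k^2 ≤ (S1 k + S2 k + S3 k) * 𝒜^2 := by
      have c1 : T1 k^2 ≤ S1 k * 𝒜^2 := by
        calc T1 k^2 ≤ ((S1 k) ^ (1/2:ℝ) * 𝒜)^2 := pow_le_pow_left' (hT1b k) 2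
          _ = S1 k * 𝒜^2 := by rw [mul_pow, hgsq]
      have c2 : T2 k^2 ≤ S2 k * 𝒜^2 := by
        calc T2 k^2 ≤ ((S2 k) ^ (1/2:ℝ) * 𝒜)^2 := pow_le_pow_left' (hT2b k) 2
          _ = S2 k * 𝒜^2 := by rw [mul_pow, hgsq]
      have c3 : T3 k^2 ≤ S3 k * 𝒜^2 := by
        calc T3 k^2 ≤ ((S3 k) ^ (1/2:ℝ) * 𝒜)^2 := pow_le_pow_left' (hT3b k) 2
          _ = S3 k * 𝒜^2 := by rw [mul_pow, hgsq]
      calc T1 k^2 + T2 k^2 + T3 k^2 ≤ S1 k * 𝒜^2 + S2 k * 𝒜^2 + S3 k * 𝒜^2 := by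
            exact add_le_add (add_le_add c1 c2) c3
        _ = (S1 k + S2 k + S3 k) * 𝒜^2 := by ring
    calc (v k * ENNReal.ofReal ‖FoscCoeff W t k‖)^2 ≤ (E3 * (T1 k + T2 k + T3 k))^2 := b2
      _ = E3^2 * (T1 k + T2 k + T3 k)^2 := mul_pow E3 _ 2
      _ ≤ E3^2 * (9 * (T1 k^2 + T2 k^2 + T3 k^2)) := mul_le_mul_right b3 _
      _ ≤ E3^2 * (9 * ((S1 k + S2 k + S3 k) * 𝒜^2)) := by
          exact mul_le_mul_right (mul_le_mul_right b4 _) _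
      _ = (E3^2 * 9 * 𝒜^2) * (S1 k + S2 k + S3 k) := by ring
  have hsumS : ∑' k : ℤ, (S1 k + S2 k + S3 k) = 3 * (N2 * 𝒜^2) := by
    rw [ENNReal.tsum_add, ENNReal.tsum_add, hS1sum, hS2sum, hS3sum]
    ring
  have hFsum : ∑' k : ℤ, (v k * ENNReal.ofReal ‖FoscCoeff W t k‖)^2
      ≤ E3^2 * 27 * (𝒜^2)^2 * N2 := by
    calc ∑' k : ℤ, (v k * ENNReal.ofReal ‖FoscCoeff W t k‖)^2
        ≤ ∑' k : ℤ, (E3^2 * 9 * 𝒜^2) * (S1 k + S2 k + S3 k) := ENNReal.tsum_le_tsum hβ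
      _ = (E3^2 * 9 * 𝒜^2) * ∑' k : ℤ, (S1 k + S2 k + S3 k) := ENNReal.tsum_mul_left
      _ = (E3^2 * 9 * 𝒜^2) * (3 * (N2 * 𝒜^2)) := by rw [hsumS]
      _ = E3^2 * 27 * (𝒜^2)^2 * N2 := by ring
  -- ℓ¹ bound on 𝒜
  have hZE : ∑' n : ℤ, ((v n)⁻¹)^2 = ENNReal.ofReal Zr := by
    have h1 : ∀ n : ℤ, ((v n)⁻¹)^2 = ENNReal.ofReal ((1+(n:ℝ)^2)^(-s)) := by
      intro n
      rw [hvd]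
      simp only []
      rw [← ENNReal.ofReal_inv_of_pos (by positivity), ← ENNReal.ofReal_pow (by positivity)]
      congr 1
      rw [← Real.rpow_neg (by positivity), ← Real.rpow_natCast ((1+(n:ℝ)^2)^(-(s/2))) 2,
        ← Real.rpow_mul (by positivity)]
      congr 1
      ring
    rw [tsum_congr h1, ← ENNReal.ofReal_tsum_of_nonneg (fun n => by positivity) hZsum]
  have hA2 : 𝒜^2 ≤ ENNReal.ofReal Zr * N2 := by
    have hfg : ∀ n : ℤ, a n = ((v n)⁻¹) * (v n * a n) := by
      intro n
      rw [← mul_assoc, ENNReal.inv_mul_cancel (hv0 n) (hvt n), one_mul]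
    have hcs := cs_tsum (fun n : ℤ => (v n)⁻¹) (fun n : ℤ => v n * a n)
    have hA1 : 𝒜 ≤ (ENNReal.ofReal Zr) ^ (1/2:ℝ) * N2 ^ (1/2:ℝ) := by
      calc 𝒜 = ∑' n : ℤ, ((v n)⁻¹) * (v n * a n) := by rw [hAd]; exact tsum_congr hfg
        _ ≤ (∑' n : ℤ, ((v n)⁻¹)^2) ^ (1/2:ℝ) * (∑' n : ℤ, (v n * a n)^2) ^ (1/2:ℝ) := hcs
        _ = (ENNReal.ofReal Zr) ^ (1/2:ℝ) * N2 ^ (1/2:ℝ) := by rw [hZE, ← hN2d]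
    calc 𝒜^2 ≤ ((ENNReal.ofReal Zr) ^ (1/2:ℝ) * N2 ^ (1/2:ℝ))^2 := pow_le_pow_left' hA1 2
      _ = ENNReal.ofReal Zr * N2 := by
          rw [mul_pow, hgsq, hgsq]
  -- final ENNReal estimate
  have h3s : (0:ℝ) ≤ 3^s := by positivity
  have hfinal : ∑' k : ℤ, (v k * ENNReal.ofReal ‖FoscCoeff W t k‖)^2
      ≤ ENNReal.ofReal (27 * (3^s)^2 * Zr^2 * X^3) := by
    have step : ∑' k : ℤ, (v k * ENNReal.ofReal ‖FoscCoeff W t k‖)^2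
        ≤ E3^2 * 27 * (ENNReal.ofReal Zr * N2)^2 * N2 := by
      refine hFsum.trans ?_
      gcongr
    refine step.trans (le_of_eq ?_)
    rw [hN2, hE3d]
    rw [← ENNReal.ofReal_mul hZpos.le]
    rw [← ENNReal.ofReal_pow h3s, ← ENNReal.ofReal_pow (by positivity : (0:ℝ) ≤ Zr * X)]
    rw [show (27:ℝ≥0∞) = ENNReal.ofReal (27:ℝ) by norm_num]
    rw [← ENNReal.ofReal_mul (by positivity), ← ENNReal.ofReal_mul (by positivity),
      ← ENNReal.ofReal_mul (by positivity)]
    congr 1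
    ring
  -- convert back to ℝ
  set y : ℤ → ℝ := fun k => (1 + (k:ℝ)^2)^s * ‖FoscCoeff W t k‖^2 with hyd
  have hynn : ∀ k, 0 ≤ y k := fun k => by rw [hyd]; positivity
  have hvF : ∀ k : ℤ, (v k * ENNReal.ofReal ‖FoscCoeff W t k‖)^2 = ENNReal.ofReal (y k) := by
    intro k
    rw [hvd, hyd]
    simp only []
    rw [← ENNReal.ofReal_mul (by positivity), ← ENNReal.ofReal_pow (by positivity)]
    congr 1
    rw [mul_pow, ← Real.rpow_natCast ((1+(k:ℝ)^2)^(s/2)) 2, ← Real.rpow_mul (by positivity)]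
    norm_num
  set R : ℝ := 27 * (3^s)^2 * Zr^2 * X^3 with hRd
  have hR : 0 ≤ R := by rw [hRd]; positivity
  have hLE : ∑' k : ℤ, ENNReal.ofReal (y k) ≤ ENNReal.ofReal R := by
    rw [← tsum_congr hvF]
    exact hfinal
  have hne : (∑' k : ℤ, ENNReal.ofReal (y k)) ≠ ⊤ :=
    (lt_of_le_of_lt hLE ENNReal.ofReal_lt_top).ne
  have hco : ∀ k : ℤ, ENNReal.ofReal (y k) = (((y k).toNNReal : NNReal) : ℝ≥0∞) := fun k => rfl
  have hsnn : Summable (fun k : ℤ => (y k).toNNReal) := by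
    apply ENNReal.tsum_coe_ne_top_iff_summable.mp
    rw [← tsum_congr hco]
    exact hne
  have hsumy : Summable y := by
    have h1 := NNReal.summable_coe.mpr hsnn
    apply h1.congr
    intro k
    exact Real.coe_toNNReal _ (hynn k)
  have hY : ∑' k : ℤ, y k ≤ R := by
    have h1 : ENNReal.ofReal (∑' k : ℤ, y k) ≤ ENNReal.ofReal R := by
      rw [ENNReal.ofReal_tsum_of_nonneg hynn hsumy]
      exact hLE
    exact (ENNReal.ofReal_le_ofReal_iff hR).mp h1
  have hre : R = (Real.sqrt 27 * 3^s * Zr * Real.sqrt X ^ 3)^2 := by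
    have h27 : Real.sqrt 27 ^ 2 = 27 := Real.sq_sqrt (by norm_num)
    have hXs : Real.sqrt X ^ 2 = X := Real.sq_sqrt hX
    calc R = (Real.sqrt 27 ^ 2) * (3^s)^2 * Zr^2 * (Real.sqrt X ^ 2)^3 := by rw [h27, hXs]
      _ = (Real.sqrt 27 * 3^s * Zr * Real.sqrt X ^ 3)^2 := by ring
  calc Real.sqrt (∑' k : ℤ, (1 + (k:ℝ)^2)^s * ‖FoscCoeff W t k‖^2)
      ≤ Real.sqrt R := Real.sqrt_le_sqrt hY
    _ = Real.sqrt 27 * 3^s * Zr * Real.sqrt X ^ 3 := by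
        rw [hre, Real.sqrt_sq (by positivity)]
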